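/- Let S be a 5-progression-free subset of F_5^2 with |S| = 16. Then there are at least 12 affine lines ℓ of F_5^2 with |ℓ ∩ S| = 4. -/
import Mathlib


/-- A subset `S` of `F_p^n` is `k`-progression-free if there are no `a, d` with `d ≠ 0`
such that `a + i • d ∈ S` for all `i ∈ {0, …, k-1}`. -/
def ProgFree (p n k : ℕ) (S : Finset (Fin n → ZMod p)) : Prop :=
  ¬ ∃ a d : Fin n → ZMod p, d ≠ 0 ∧ ∀ i : ℕ, i < k → a + (i : ZMod p) • d ∈ S

/-- An affine line of `F_5^2`, as a finite set of points. -/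
def IsLine (L : Finset (Fin 2 → ZMod 5)) : Prop :=
  ∃ a d : Fin 2 → ZMod 5, d ≠ 0 ∧
    L = Finset.image (fun t : ZMod 5 => a + t • d) Finset.univ

abbrev MyPt := Fin 2 → ZMod 5

/-- Canonical parametrization of the 30 affine lines of `F_5^2`. -/
def LineP : (ZMod 5 × ZMod 5) ⊕ ZMod 5 → Finset MyPt
  | .inl (m, b) => Finset.univ.filter (fun p => p 1 = m * p 0 + b)
  | .inr c => Finset.univ.filter (fun p => p 0 = c)

def chooseIdx (a d : MyPt) : (ZMod 5 × ZMod 5) ⊕ ZMod 5 :=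
  if d 0 = 0 then .inr (a 0)
  else .inl (d 1 * (d 0)^3, a 1 - d 1 * (d 0)^3 * a 0)

lemma lineP_inj : Function.Injective LineP := by decide

lemma lineP_card : ∀ i, (LineP i).card = 5 := by decide

lemma pair_count : ∀ p q : MyPt,
    (Finset.univ.filter (fun i => p ∈ LineP i ∧ q ∈ LineP i)).card
      = if p = q then 6 else 1 := by decide

set_option maxHeartbeats 4000000 in
lemma image_eq_lineP : ∀ a d : MyPt, d ≠ 0 →
    Finset.image (fun t : ZMod 5 => a + t • d) Finset.univ = LineP (chooseIdx a d) := by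
  decide

lemma lineP_slope : ∀ m b : ZMod 5,
    Finset.image (fun t : ZMod 5 => ![(0:ZMod 5), b] + t • ![1, m]) Finset.univ
      = LineP (.inl (m, b)) := by decide

lemma lineP_vert : ∀ c : ZMod 5,
    Finset.image (fun t : ZMod 5 => ![c, (0:ZMod 5)] + t • ![0, 1]) Finset.univ
      = LineP (.inr c) := by decide

lemma isLine_lineP : ∀ i, IsLine (LineP i) := by
  have hne : ∀ m : ZMod 5, ![(1:ZMod 5), m] ≠ 0 := by decide
  rintro (⟨m, b⟩ | c)
  · exact ⟨![0, b], ![1, m], hne m, (lineP_slope m b).symm⟩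
  · exact ⟨![c, 0], ![0, 1], by decide, (lineP_vert c).symm⟩

lemma isLine_iff (L : Finset MyPt) : IsLine L ↔ ∃ i, LineP i = L := by
  constructor
  · rintro ⟨a, d, hd, rfl⟩
    exact ⟨chooseIdx a d, (image_eq_lineP a d hd).symm⟩
  · rintro ⟨i, rfl⟩
    exact isLine_lineP i

theorem stmt_9 (S : Finset (Fin 2 → ZMod 5)) (hS : ProgFree 5 2 5 S)
    (hcard : S.card = 16) :
    12 ≤ {L : Finset (Fin 2 → ZMod 5) | IsLine L ∧ (L ∩ S).card = 4}.ncard := by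
  classical
  -- express the intersection cardinalities as indicator sums
  have hr : ∀ i, (LineP i ∩ S).card = ∑ p ∈ S, if p ∈ LineP i then 1 else 0 := by
    intro i
    rw [Finset.inter_comm, ← Finset.filter_mem_eq_inter, Finset.card_filter]
  -- each line meets S in at most 4 points
  have hle : ∀ i, (LineP i ∩ S).card ≤ 4 := by
    intro i
    by_contra h
    push_neg at h
    have hsub : LineP i ∩ S ⊆ LineP i := Finset.inter_subset_left
    have hcl : (LineP i).card ≤ (LineP i ∩ S).card := by rw [lineP_card]; omega
    have heq : LineP i ∩ S = LineP i := Finset.eq_of_subset_of_card_le hsub hcl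
    have hLS : LineP i ⊆ S := by
      rw [← heq]; exact Finset.inter_subset_right
    obtain ⟨a, d, hd, hL⟩ := isLine_lineP i
    exact hS ⟨a, d, hd, fun j _ => hLS (hL ▸ Finset.mem_image.2
      ⟨(j : ZMod 5), Finset.mem_univ _, rfl⟩)⟩
  -- first moment: total incidences
  have hA : ∑ i : (ZMod 5 × ZMod 5) ⊕ ZMod 5, (LineP i ∩ S).card = 96 := by
    simp_rw [hr]
    rw [Finset.sum_comm]
    have h6 : ∀ p ∈ S, (∑ i : (ZMod 5 × ZMod 5) ⊕ ZMod 5,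
        if p ∈ LineP i then 1 else 0) = 6 := by
      intro p _
      have h := pair_count p p
      rw [Finset.card_filter] at h
      simpa [and_self] using h
    rw [Finset.sum_congr rfl h6, Finset.sum_const, hcard]
    simp
  -- second moment
  have hB : ∑ i : (ZMod 5 × ZMod 5) ⊕ ZMod 5, (LineP i ∩ S).card ^ 2 = 336 := by
    have hsq : ∀ i, (LineP i ∩ S).card ^ 2
        = ∑ p ∈ S, ∑ q ∈ S, if p ∈ LineP i ∧ q ∈ LineP i then 1 else 0 := by
      intro i
      rw [hr, sq, Finset.sum_mul_sum]
      refine Finset.sum_congr rfl fun p _ => Finset.sum_congr rfl fun q _ => ?_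
      split_ifs with h1 h2 h3 <;> simp_all
    simp_rw [hsq]
    rw [Finset.sum_comm]
    have hinner : ∀ p ∈ S, (∑ i : (ZMod 5 × ZMod 5) ⊕ ZMod 5,
        ∑ q ∈ S, if p ∈ LineP i ∧ q ∈ LineP i then 1 else 0) = 21 := by
      intro p hp
      rw [Finset.sum_comm]
      have hq : ∀ q ∈ S, (∑ i : (ZMod 5 × ZMod 5) ⊕ ZMod 5,
          if p ∈ LineP i ∧ q ∈ LineP i then 1 else 0) = if p = q then 6 else 1 := by
        intro q _
        rw [← pair_count p q, Finset.card_filter]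
      rw [Finset.sum_congr rfl hq]
      have : ∀ q : MyPt, (if p = q then (6:ℕ) else 1) = (if p = q then 5 else 0) + 1 := by
        intro q; split_ifs <;> rfl
      simp_rw [this]
      rw [Finset.sum_add_distrib, Finset.sum_ite_eq, if_pos hp, Finset.sum_const, hcard]
      simp
    rw [Finset.sum_congr rfl hinner, Finset.sum_const, hcard]
    simp
  -- pointwise inequality r^2 ≤ 3r + 4·[r = 4]
  have hpt : ∀ i, (LineP i ∩ S).card ^ 2
      ≤ 3 * (LineP i ∩ S).card + 4 * (if (LineP i ∩ S).card = 4 then 1 else 0) := by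
    intro i
    have := hle i
    interval_cases h : (LineP i ∩ S).card <;> simp
  -- sum it up
  have hsum : (336 : ℕ) ≤ 288 + 4 *
      (Finset.univ.filter (fun i => (LineP i ∩ S).card = 4)).card := by
    calc (336 : ℕ) = ∑ i : (ZMod 5 × ZMod 5) ⊕ ZMod 5, (LineP i ∩ S).card ^ 2 := hB.symm
      _ ≤ ∑ i : (ZMod 5 × ZMod 5) ⊕ ZMod 5, (3 * (LineP i ∩ S).card
            + 4 * (if (LineP i ∩ S).card = 4 then 1 else 0)) :=
          Finset.sum_le_sum fun i _ => hpt i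
      _ = 3 * (∑ i : (ZMod 5 × ZMod 5) ⊕ ZMod 5, (LineP i ∩ S).card)
            + 4 * ∑ i : (ZMod 5 × ZMod 5) ⊕ ZMod 5,
                (if (LineP i ∩ S).card = 4 then 1 else 0) := by
          rw [Finset.sum_add_distrib, Finset.mul_sum, Finset.mul_sum]
      _ = 288 + 4 * (Finset.univ.filter (fun i => (LineP i ∩ S).card = 4)).card := by
          rw [hA, Finset.card_filter]
  -- identify the set with a filter over the parametrized lines
  have hset : {L : Finset (Fin 2 → ZMod 5) | IsLine L ∧ (L ∩ S).card = 4}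
      = ↑((Finset.univ.image LineP).filter (fun L => (L ∩ S).card = 4)) := by
    ext L
    simp only [Set.mem_setOf_eq, Finset.coe_filter, Finset.mem_image, Finset.mem_univ,
      true_and, isLine_iff]
  rw [hset, Set.ncard_coe_finset, Finset.filter_image,
    Finset.card_image_of_injective _ lineP_inj]
  omega
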